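/- arXiv:2604.03084 — 5 statements merged into one kernel-verified Lean document; each statement's English description precedes it below -/
import Mathlib

section
/- Let σ = (σ₁, σ₂) ∈ ℝ² with σ ≠ 0, write |σ| = √(σ₁² + σ₂²), and let E₁, E₂, e₃, a ∈ ℂ. Suppose that for both values s = 1 and s = −1 the following three equations hold: −s|σ|E₂ + iσ₂(s e₃) + iσ₁ a = 0, s|σ|E₁ − iσ₁(s e₃) + iσ₂ a = 0, and −iσ₂E₁ + iσ₁E₂ + s|σ| a = 0. Then a = 0 and there exists C ∈ ℂ such that E₁ = iσ₁C, E₂ = iσ₂C, and e₃ = |σ|C. -/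
open Complex

/-- After Fourier transform in the tangential variables, the system
`curl E + ∇α = 0` for exponentially decaying fields forces `a = 0` and
`(E₁, E₂, e₃) = C (iσ₁, iσ₂, |σ|)` for some constant `C`. -/
theorem fourier_system_solution
    (σ1 σ2 : ℝ) (hσ : ¬(σ1 = 0 ∧ σ2 = 0)) (E1 E2 e3 a : ℂ)
    (h : ∀ s : ℂ, s = 1 ∨ s = -1 →
      (-s * (Real.sqrt (σ1 ^ 2 + σ2 ^ 2) : ℂ) * E2 + I * σ2 * (s * e3) + I * σ1 * a = 0 ∧
       s * (Real.sqrt (σ1 ^ 2 + σ2 ^ 2) : ℂ) * E1 - I * σ1 * (s * e3) + I * σ2 * a = 0 ∧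
       -(I * σ2 * E1) + I * σ1 * E2 + s * (Real.sqrt (σ1 ^ 2 + σ2 ^ 2) : ℂ) * a = 0)) :
    a = 0 ∧ ∃ C : ℂ, E1 = I * σ1 * C ∧ E2 = I * σ2 * C ∧
      e3 = (Real.sqrt (σ1 ^ 2 + σ2 ^ 2) : ℂ) * C := by
  obtain ⟨a1, b1, c1⟩ := h 1 (Or.inl rfl)
  obtain ⟨a2, b2, c2⟩ := h (-1) (Or.inr rfl)
  have hrpos : (0:ℝ) < Real.sqrt (σ1 ^ 2 + σ2 ^ 2) := by
    apply Real.sqrt_pos.2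
    rcases not_and_or.1 hσ with h0 | h0 <;> positivity
  have hr : (Real.sqrt (σ1 ^ 2 + σ2 ^ 2) : ℂ) ≠ 0 := by
    exact_mod_cast hrpos.ne'
  have h1 : (σ1 : ℂ) * a = 0 := by
    linear_combination (-I/2) * a1 + (-I/2) * a2 + ((σ1:ℂ) * a) * Complex.I_sq
  have h2 : (σ2 : ℂ) * a = 0 := by
    linear_combination (-I/2) * b1 + (-I/2) * b2 + ((σ2:ℂ) * a) * Complex.I_sq
  have ha : a = 0 := by
    rcases mul_eq_zero.1 h1 with hs1 | ha
    · rcases mul_eq_zero.1 h2 with hs2 | ha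
      · exact absurd ⟨by exact_mod_cast hs1, by exact_mod_cast hs2⟩ hσ
      · exact ha
    · exact ha
  rw [ha] at a1 b1
  refine ⟨ha, e3 / (Real.sqrt (σ1 ^ 2 + σ2 ^ 2) : ℂ), ?_, ?_, ?_⟩
  · field_simp
    linear_combination b1
  · field_simp
    linear_combination -a1
  · field_simp
end

section
/- Let σ = (σ₁, σ₂) ∈ ℝ² with σ ≠ 0, write |σ| = √(σ₁² + σ₂²), let ε be a 3×3 real symmetric positive definite matrix acting on ℂ³ componentwise through its real entries, and let E₁, E₂, e₃, a ∈ ℂ. Suppose that for both values s = 1 and s = −1 the following three equations hold: −s|σ|E₂ + iσ₂(s e₃) + iσ₁ a = 0, s|σ|E₁ − iσ₁(s e₃) + iσ₂ a = 0, and −iσ₂E₁ + iσ₁E₂ + s|σ| a = 0. Suppose additionally that the third component of ε·(E₁, E₂, e₃) equals the third component of ε·(E₁, E₂, −e₃). Then E₁ = E₂ = e₃ = a = 0. -/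
open Complex

/-- Algebraic core of the Shapiro–Lopatinsky condition for the transmission problem:
the Fourier-transformed ODE boundary value problem has only the trivial decaying
solution for every nonzero tangential dual variable `σ`. -/
theorem shapiro_lopatinsky_trivial_solution
    (σ1 σ2 : ℝ) (hσ : ¬(σ1 = 0 ∧ σ2 = 0))
    (ε : Matrix (Fin 3) (Fin 3) ℝ) (hsymm : ε.IsSymm) (hpos : ε.PosDef)
    (E1 E2 e3 a : ℂ)
    (h : ∀ s : ℂ, s = 1 ∨ s = -1 →
      (-s * (Real.sqrt (σ1 ^ 2 + σ2 ^ 2) : ℂ) * E2 + I * σ2 * (s * e3) + I * σ1 * a = 0 ∧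
       s * (Real.sqrt (σ1 ^ 2 + σ2 ^ 2) : ℂ) * E1 - I * σ1 * (s * e3) + I * σ2 * a = 0 ∧
       -(I * σ2 * E1) + I * σ1 * E2 + s * (Real.sqrt (σ1 ^ 2 + σ2 ^ 2) : ℂ) * a = 0))
    (hjump : ((ε.map (Complex.ofReal)).mulVec ![E1, E2, e3]) 2 =
             ((ε.map (Complex.ofReal)).mulVec ![E1, E2, -e3]) 2) :
    E1 = 0 ∧ E2 = 0 ∧ e3 = 0 ∧ a = 0 := by
  set r : ℝ := Real.sqrt (σ1 ^ 2 + σ2 ^ 2) with hr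
  have hσpos : 0 < σ1 ^ 2 + σ2 ^ 2 := by
    rcases not_and_or.mp hσ with h1 | h2
    · positivity
    · positivity
  have hrpos : 0 < r := Real.sqrt_pos.mpr hσpos
  have hrne : (r : ℂ) ≠ 0 := by
    exact_mod_cast ne_of_gt hrpos
  obtain ⟨h11, h12, h13⟩ := h 1 (Or.inl rfl)
  obtain ⟨h21, h22, h23⟩ := h (-1) (Or.inr rfl)
  -- a = 0
  have ha : a = 0 := by
    have h2ra : (2 : ℂ) * r * a = 0 := by linear_combination h13 - h23
    have : (r : ℂ) * a = 0 := by linear_combination h2ra / 2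
    rcases mul_eq_zero.mp this with h | h
    · exact absurd h hrne
    · exact h
  -- e3 = 0 from the jump condition
  have hdiag : 0 < ε 2 2 := by
    exact hpos.diag_pos
  have hdne : (ε 2 2 : ℂ) ≠ 0 := by exact_mod_cast ne_of_gt hdiag
  have he3 : e3 = 0 := by
    simp only [Matrix.mulVec, dotProduct, Fin.sum_univ_three, Matrix.map_apply,
      Matrix.cons_val', Matrix.cons_val_zero, Matrix.cons_val_one, Matrix.head_cons,
      Matrix.cons_val_two, Matrix.tail_cons, Matrix.empty_val', Matrix.cons_val_fin_one,
      Matrix.head_fin_const] at hjump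
    have : (ε 2 2 : ℂ) * e3 = 0 := by linear_combination hjump / 2
    rcases mul_eq_zero.mp this with h | h
    · exact absurd h hdne
    · exact h
  have hE1 : E1 = 0 := by
    have : (r : ℂ) * E1 = 0 := by
      rw [ha, he3] at h12; linear_combination h12
    rcases mul_eq_zero.mp this with h | h
    · exact absurd h hrne
    · exact h
  have hE2 : E2 = 0 := by
    have : (r : ℂ) * E2 = 0 := by
      rw [ha, he3] at h11; linear_combination -h11
    rcases mul_eq_zero.mp this with h | h
    · exact absurd h hrne
    · exact h
  exact ⟨hE1, hE2, he3, ha⟩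
end

section
/- Let U ⊆ ℝ³ be open, ω ∈ ℂ, let E, B, K : U → ℂ³ with E twice differentiable and B, K differentiable on U, let α : U → ℂ be twice differentiable, and let k : U → ℂ. Suppose curl E + ∇α = iωB + K, div B = k, and iωk = −div K on U. Then Δα = 0 on U, i.e., α is harmonic on U. (Classical interior form of the key step (4.15) in the proofs of Theorems 3.2(ii) and 4.3(ii): applying the divergence to the extended equation and using div curl = 0 forces the auxiliary scalar to be harmonic.) -/
open Complex

/-- Partial derivative `∂ᵢ` of a scalar function on `ℝ³`. -/
noncomputable def pd3 (i : Fin 3) (f : (Fin 3 → ℝ) → ℂ) (x : Fin 3 → ℝ) : ℂ :=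
  fderiv ℝ f x (Pi.single i 1)

/-- The curl of a vector field `F : ℝ³ → ℂ³`. -/
noncomputable def vcurl (F : (Fin 3 → ℝ) → Fin 3 → ℂ) (x : Fin 3 → ℝ) : Fin 3 → ℂ :=
  ![pd3 1 (fun y => F y 2) x - pd3 2 (fun y => F y 1) x,
    pd3 2 (fun y => F y 0) x - pd3 0 (fun y => F y 2) x,
    pd3 0 (fun y => F y 1) x - pd3 1 (fun y => F y 0) x]

/-- The divergence of a vector field `F : ℝ³ → ℂ³`. -/
noncomputable def vdiv (F : (Fin 3 → ℝ) → Fin 3 → ℂ) (x : Fin 3 → ℝ) : ℂ :=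
  pd3 0 (fun y => F y 0) x + pd3 1 (fun y => F y 1) x + pd3 2 (fun y => F y 2) x

/-- The Laplacian of a scalar function `α : ℝ³ → ℂ`. -/
noncomputable def lap (α : (Fin 3 → ℝ) → ℂ) (x : Fin 3 → ℝ) : ℂ :=
  pd3 0 (pd3 0 α) x + pd3 1 (pd3 1 α) x + pd3 2 (pd3 2 α) x

/-- `f` is twice differentiable at every point of `U`
(both `f` and its Fréchet derivative are differentiable there). -/
def TwiceDiffOn {E' : Type*} [NormedAddCommGroup E'] [NormedSpace ℝ E']
    (f : (Fin 3 → ℝ) → E') (U : Set (Fin 3 → ℝ)) : Prop :=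
  (∀ x ∈ U, DifferentiableAt ℝ f x) ∧ (∀ x ∈ U, DifferentiableAt ℝ (fderiv ℝ f) x)

section aux
variable {U : Set (Fin 3 → ℝ)} {x : Fin 3 → ℝ}

lemma pd3_congr (hU : IsOpen U) (hx : x ∈ U) {f g : (Fin 3 → ℝ) → ℂ}
    (h : ∀ y ∈ U, f y = g y) (i : Fin 3) : pd3 i f x = pd3 i g x := by
  unfold pd3
  rw [Filter.EventuallyEq.fderiv_eq (Filter.eventuallyEq_of_mem (hU.mem_nhds hx) h)]

lemma pd3_add {f g : (Fin 3 → ℝ) → ℂ} (hf : DifferentiableAt ℝ f x)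
    (hg : DifferentiableAt ℝ g x) (i : Fin 3) :
    pd3 i (fun y => f y + g y) x = pd3 i f x + pd3 i g x := by
  unfold pd3; rw [fderiv_fun_add hf hg]; rfl

lemma pd3_sub {f g : (Fin 3 → ℝ) → ℂ} (hf : DifferentiableAt ℝ f x)
    (hg : DifferentiableAt ℝ g x) (i : Fin 3) :
    pd3 i (fun y => f y - g y) x = pd3 i f x - pd3 i g x := by
  unfold pd3; rw [fderiv_fun_sub hf hg]; rfl

lemma pd3_const_mul {f : (Fin 3 → ℝ) → ℂ} (hf : DifferentiableAt ℝ f x) (c : ℂ) (i : Fin 3) :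
    pd3 i (fun y => c * f y) x = c * pd3 i f x := by
  unfold pd3; rw [fderiv_const_mul hf]; rfl

lemma pd3_diff {f : (Fin 3 → ℝ) → ℂ} (hf : DifferentiableAt ℝ (fderiv ℝ f) x) (j : Fin 3) :
    DifferentiableAt ℝ (pd3 j f) x := by
  have : pd3 j f = ⇑(ContinuousLinearMap.apply ℝ ℂ (Pi.single j 1)) ∘ fderiv ℝ f := rfl
  rw [this]
  exact (ContinuousLinearMap.apply ℝ ℂ (Pi.single j 1)).differentiableAt.comp x hf

lemma pd3_comm (hU : IsOpen U) {f : (Fin 3 → ℝ) → ℂ} (hf : TwiceDiffOn f U)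
    (hx : x ∈ U) (i j : Fin 3) : pd3 i (pd3 j f) x = pd3 j (pd3 i f) x := by
  have hev : ∀ᶠ y in nhds x, HasFDerivAt f (fderiv ℝ f y) y :=
    Filter.eventually_of_mem (hU.mem_nhds hx) fun y hy => (hf.1 y hy).hasFDerivAt
  have hx' : HasFDerivAt (fderiv ℝ f) (fderiv ℝ (fderiv ℝ f) x) x := (hf.2 x hx).hasFDerivAt
  have hsymm := second_derivative_symmetric_of_eventually hev hx'
  have key : ∀ a b : Fin 3, pd3 a (pd3 b f) x
      = fderiv ℝ (fderiv ℝ f) x (Pi.single a 1) (Pi.single b 1) := by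
    intro a b
    have hpd : pd3 b f = ⇑(ContinuousLinearMap.apply ℝ ℂ (Pi.single b 1)) ∘ fderiv ℝ f := rfl
    have h2 : HasFDerivAt (pd3 b f)
        ((ContinuousLinearMap.apply ℝ ℂ (Pi.single b 1)).comp (fderiv ℝ (fderiv ℝ f) x)) x := by
      rw [hpd]
      exact (ContinuousLinearMap.apply ℝ ℂ (Pi.single b 1)).hasFDerivAt.comp x hx'
    simp [pd3, h2.fderiv]
  rw [key, key, hsymm]

lemma twiceDiffOn_comp (hU : IsOpen U) {F : (Fin 3 → ℝ) → Fin 3 → ℂ}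
    (hF : TwiceDiffOn F U) (j : Fin 3) : TwiceDiffOn (fun y => F y j) U := by
  refine ⟨fun x hx => differentiableAt_pi.mp (hF.1 x hx) j, fun x hx => ?_⟩
  have heq : ∀ y ∈ U, fderiv ℝ (fun y => F y j) y
      = (ContinuousLinearMap.proj j : (Fin 3 → ℂ) →L[ℝ] ℂ).comp (fderiv ℝ F y) := by
    intro y hy
    have : (fun y => F y j) = (ContinuousLinearMap.proj j : (Fin 3 → ℂ) →L[ℝ] ℂ) ∘ F := rfl
    rw [this, fderiv_comp y (ContinuousLinearMap.differentiableAt _) (hF.1 y hy),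
      ContinuousLinearMap.fderiv]
  have hdiff : DifferentiableAt ℝ
      (fun y => (ContinuousLinearMap.proj j : (Fin 3 → ℂ) →L[ℝ] ℂ).comp (fderiv ℝ F y)) x :=
    ((ContinuousLinearMap.compL ℝ (Fin 3 → ℝ) (Fin 3 → ℂ) ℂ
      (ContinuousLinearMap.proj j)).differentiableAt).comp x (hF.2 x hx)
  exact hdiff.congr_of_eventuallyEq
    (Filter.eventuallyEq_of_mem (hU.mem_nhds hx) heq)

end aux

section aux2
variable {U : Set (Fin 3 → ℝ)} {x : Fin 3 → ℝ}

lemma pd3_expandL {A Bf c : (Fin 3 → ℝ) → ℂ} (hA : DifferentiableAt ℝ A x)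
    (hB : DifferentiableAt ℝ Bf x) (hc : DifferentiableAt ℝ c x) (i : Fin 3) :
    pd3 i (fun y => (A y - Bf y) + c y) x = pd3 i A x - pd3 i Bf x + pd3 i c x := by
  rw [pd3_add (f := fun y => A y - Bf y) (hA.sub hB) hc, pd3_sub hA hB]

lemma pd3_expandR {b κ : (Fin 3 → ℝ) → ℂ} (ω : ℂ) (hb : DifferentiableAt ℝ b x)
    (hκ : DifferentiableAt ℝ κ x) (i : Fin 3) :
    pd3 i (fun y => Complex.I * ω * b y + κ y) x
      = Complex.I * ω * pd3 i b x + pd3 i κ x := by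
  rw [pd3_add (hb.const_mul _) hκ, pd3_const_mul hb]

end aux2

/-- Classical interior form of the key step in the proofs of Theorems 3.2(ii) and
4.3(ii): if `curl E + ∇α = iωB + K`, `div B = k` and `iωk = -div K` on `U`, then the
auxiliary scalar `α` is harmonic on `U`. -/
theorem auxiliary_scalar_harmonic
    (U : Set (Fin 3 → ℝ)) (hU : IsOpen U) (ω : ℂ)
    (E B K : (Fin 3 → ℝ) → Fin 3 → ℂ) (α k : (Fin 3 → ℝ) → ℂ)
    (hE : TwiceDiffOn E U) (hα : TwiceDiffOn α U)
    (hB : ∀ x ∈ U, DifferentiableAt ℝ B x)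
    (hK : ∀ x ∈ U, DifferentiableAt ℝ K x)
    (h1 : ∀ x ∈ U, ∀ i, vcurl E x i + pd3 i α x = I * ω * B x i + K x i)
    (h2 : ∀ x ∈ U, vdiv B x = k x)
    (h3 : ∀ x ∈ U, I * ω * k x = -vdiv K x) :
    ∀ x ∈ U, lap α x = 0 := by
  intro x hx
  have hEc : ∀ j : Fin 3, TwiceDiffOn (fun y => E y j) U := twiceDiffOn_comp hU hE
  have hBc : ∀ j : Fin 3, DifferentiableAt ℝ (fun y => B y j) x :=
    fun j => differentiableAt_pi.mp (hB x hx) j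
  have hKc : ∀ j : Fin 3, DifferentiableAt ℝ (fun y => K y j) x :=
    fun j => differentiableAt_pi.mp (hK x hx) j
  have dE : ∀ i j : Fin 3, DifferentiableAt ℝ (pd3 i (fun y => E y j)) x :=
    fun i j => pd3_diff ((hEc j).2 x hx) i
  have dα : ∀ i : Fin 3, DifferentiableAt ℝ (pd3 i α) x :=
    fun i => pd3_diff (hα.2 x hx) i
  have e0 : pd3 0 (pd3 1 (fun y => E y 2)) x - pd3 0 (pd3 2 (fun y => E y 1)) x
      + pd3 0 (pd3 0 α) x
      = I * ω * pd3 0 (fun y => B y 0) x + pd3 0 (fun y => K y 0) x := by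
    have h := pd3_congr hU hx (f := fun y => (pd3 1 (fun z => E z 2) y
        - pd3 2 (fun z => E z 1) y) + pd3 0 α y)
      (g := fun y => I * ω * B y 0 + K y 0) (fun y hy => h1 y hy 0) 0
    rwa [pd3_expandL (dE 1 2) (dE 2 1) (dα 0), pd3_expandR ω (hBc 0) (hKc 0)] at h
  have e1 : pd3 1 (pd3 2 (fun y => E y 0)) x - pd3 1 (pd3 0 (fun y => E y 2)) x
      + pd3 1 (pd3 1 α) x
      = I * ω * pd3 1 (fun y => B y 1) x + pd3 1 (fun y => K y 1) x := by
    have h := pd3_congr hU hx (f := fun y => (pd3 2 (fun z => E z 0) y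
        - pd3 0 (fun z => E z 2) y) + pd3 1 α y)
      (g := fun y => I * ω * B y 1 + K y 1) (fun y hy => h1 y hy 1) 1
    rwa [pd3_expandL (dE 2 0) (dE 0 2) (dα 1), pd3_expandR ω (hBc 1) (hKc 1)] at h
  have e2 : pd3 2 (pd3 0 (fun y => E y 1)) x - pd3 2 (pd3 1 (fun y => E y 0)) x
      + pd3 2 (pd3 2 α) x
      = I * ω * pd3 2 (fun y => B y 2) x + pd3 2 (fun y => K y 2) x := by
    have h := pd3_congr hU hx (f := fun y => (pd3 0 (fun z => E z 1) y
        - pd3 1 (fun z => E z 0) y) + pd3 2 α y)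
      (g := fun y => I * ω * B y 2 + K y 2) (fun y hy => h1 y hy 2) 2
    rwa [pd3_expandL (dE 0 1) (dE 1 0) (dα 2), pd3_expandR ω (hBc 2) (hKc 2)] at h
  have c1 : pd3 0 (pd3 1 (fun y => E y 2)) x = pd3 1 (pd3 0 (fun y => E y 2)) x :=
    pd3_comm hU (hEc 2) hx 0 1
  have c2 : pd3 0 (pd3 2 (fun y => E y 1)) x = pd3 2 (pd3 0 (fun y => E y 1)) x :=
    pd3_comm hU (hEc 1) hx 0 2
  have c3 : pd3 1 (pd3 2 (fun y => E y 0)) x = pd3 2 (pd3 1 (fun y => E y 0)) x :=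
    pd3_comm hU (hEc 0) hx 1 2
  have hdivB := h2 x hx
  have hdivK := h3 x hx
  unfold vdiv at hdivB hdivK
  unfold lap
  linear_combination e0 + e1 + e2 - c1 + c2 - c3 + I * ω * hdivB + hdivK
end

section
/- Let U ⊆ ℝ³ be open and ω ∈ ℂ. Let E⁺, B⁺ : U → ℂ³ and α⁺ : U → ℂ be continuously differentiable on U with curl E⁺ + ∇α⁺ = iωB⁺ on U ∩ {x₃ > 0}, and let E⁻, B⁻ : U → ℂ³ and α⁻ : U → ℂ be continuously differentiable on U with curl E⁻ + ∇α⁻ = iωB⁻ on U ∩ {x₃ < 0}. Suppose that on U ∩ {x₃ = 0} one has E⁺₁ = E⁻₁, E⁺₂ = E⁻₂ (continuity of the tangential components of E) and B⁺₃ = B⁻₃ (continuity of the normal component of B). Then ∂₃α⁺ = ∂₃α⁻ at every point of U ∩ {x₃ = 0}. (Flat-interface classical form of the step ⟦∂α/∂n⟧ = 0 in the proof of Theorem 3.2(ii): the normal derivative of the auxiliary scalar α has no jump across the interface.) -/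
open Complex

open Filter Topology

lemma pd3_contOn {U : Set (Fin 3 → ℝ)} (hU : IsOpen U) {f : (Fin 3 → ℝ) → ℂ}
    (hf : ContDiffOn ℝ 1 f U) (v : Fin 3 → ℝ) :
    ContinuousOn (fun x => fderiv ℝ f x v) U := by
  have h := hf.continuousOn_fderiv_of_isOpen hU le_rfl
  exact h.clm_apply continuousOn_const

lemma interface_limit {U : Set (Fin 3 → ℝ)} (hU : IsOpen U) {g : (Fin 3 → ℝ) → ℂ}
    (hg : ContinuousOn g U) (h0 : ∀ y ∈ U, y 2 > 0 → g y = 0)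
    {x : Fin 3 → ℝ} (hx : x ∈ U) (hx2 : x 2 = 0) : g x = 0 := by
  set s : ℕ → (Fin 3 → ℝ) := fun n => x + ((n : ℝ) + 1)⁻¹ • (Pi.single 2 1 : Fin 3 → ℝ) with hs_def
  have hinv : Tendsto (fun n : ℕ => ((n : ℝ) + 1)⁻¹) atTop (𝓝 0) := by
    simpa using tendsto_one_div_add_atTop_nhds_zero_nat (𝕜 := ℝ)
  have hs : Tendsto s atTop (𝓝 x) := by
    have := (hinv.smul_const (Pi.single 2 1 : Fin 3 → ℝ)).const_add x
    simpa using this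
  have hsU : ∀ᶠ n in atTop, s n ∈ U := hs.eventually (hU.mem_nhds hx)
  have hgs : ∀ᶠ n in atTop, g (s n) = 0 := by
    refine hsU.mono fun n hn => h0 _ hn ?_
    have : (s n) 2 = ((n : ℝ) + 1)⁻¹ := by simp [hs_def, hx2]
    rw [this]; positivity
  have hT : Tendsto (fun n => g (s n)) atTop (𝓝 (g x)) :=
    (hg.continuousAt (hU.mem_nhds hx)).tendsto.comp hs
  have hT0 : Tendsto (fun n => g (s n)) atTop (𝓝 0) :=
    Tendsto.congr' (hgs.mono fun n h => h.symm) tendsto_const_nhds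
  exact tendsto_nhds_unique hT hT0

lemma tangential_deriv_zero {U : Set (Fin 3 → ℝ)} (hU : IsOpen U)
    {f : (Fin 3 → ℝ) → ℂ} {x : Fin 3 → ℝ} (hx : x ∈ U)
    (hf : DifferentiableAt ℝ f x) (h0 : ∀ y ∈ U, y 2 = 0 → f y = 0) (hx2 : x 2 = 0)
    {v : Fin 3 → ℝ} (hv : v 2 = 0) : fderiv ℝ f x v = 0 := by
  set γ : ℝ → (Fin 3 → ℝ) := fun t => x + t • v with hγ_def
  have hγ : HasDerivAt γ v 0 := by
    have := ((hasDerivAt_id (0 : ℝ)).smul_const v).const_add x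
    simpa [hγ_def] using this
  have hγ0 : γ 0 = x := by simp [hγ_def]
  have comp : HasDerivAt (f ∘ γ) (fderiv ℝ f x v) 0 := by
    have hF : HasFDerivAt f (fderiv ℝ f x) (γ 0) := hγ0 ▸ hf.hasFDerivAt
    exact hF.comp_hasDerivAt 0 hγ
  have hmem : ∀ᶠ t in 𝓝 (0 : ℝ), γ t ∈ U := by
    have hc : ContinuousAt γ 0 := hγ.continuousAt
    have := hc.preimage_mem_nhds (hγ0 ▸ hU.mem_nhds hx)
    exact this
  have ev : f ∘ γ =ᶠ[𝓝 (0 : ℝ)] fun _ => 0 := by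
    refine hmem.mono fun t ht => ?_
    have : (γ t) 2 = 0 := by simp [hγ_def, hx2, hv]
    exact h0 _ ht this
  have hz : HasDerivAt (f ∘ γ) 0 0 :=
    (hasDerivAt_const (0 : ℝ) (0 : ℂ)).congr_of_eventuallyEq ev
  exact comp.unique hz

lemma interface_limit_neg {U : Set (Fin 3 → ℝ)} (hU : IsOpen U) {g : (Fin 3 → ℝ) → ℂ}
    (hg : ContinuousOn g U) (h0 : ∀ y ∈ U, y 2 < 0 → g y = 0)
    {x : Fin 3 → ℝ} (hx : x ∈ U) (hx2 : x 2 = 0) : g x = 0 := by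
  set s : ℕ → (Fin 3 → ℝ) := fun n => x + (-((n : ℝ) + 1)⁻¹) • (Pi.single 2 1 : Fin 3 → ℝ) with hs_def
  have hinv : Tendsto (fun n : ℕ => -((n : ℝ) + 1)⁻¹) atTop (𝓝 0) := by
    have : Tendsto (fun n : ℕ => ((n : ℝ) + 1)⁻¹) atTop (𝓝 0) := by
      simpa using tendsto_one_div_add_atTop_nhds_zero_nat (𝕜 := ℝ)
    simpa using this.neg
  have hs : Tendsto s atTop (𝓝 x) := by
    have := (hinv.smul_const (Pi.single 2 1 : Fin 3 → ℝ)).const_add x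
    simpa [hs_def, neg_smul] using this
  have hsU : ∀ᶠ n in atTop, s n ∈ U := hs.eventually (hU.mem_nhds hx)
  have hgs : ∀ᶠ n in atTop, g (s n) = 0 := by
    refine hsU.mono fun n hn => h0 _ hn ?_
    have h2 : (s n) 2 = -((n : ℝ) + 1)⁻¹ := by simp [hs_def, hx2]
    rw [h2]
    have : (0:ℝ) < ((n : ℝ) + 1)⁻¹ := by positivity
    linarith
  have hT : Tendsto (fun n => g (s n)) atTop (𝓝 (g x)) :=
    (hg.continuousAt (hU.mem_nhds hx)).tendsto.comp hs
  have hT0 : Tendsto (fun n => g (s n)) atTop (𝓝 0) :=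
    Tendsto.congr' (hgs.mono fun n h => h.symm) tendsto_const_nhds
  exact tendsto_nhds_unique hT hT0

/-- Flat-interface classical form of the step `⟦∂α/∂n⟧ = 0` in the proof of Theorem
3.2(ii): if `curl E± + ∇α± = iωB±` on the two sides of `{x₃ = 0}` and on the interface
the tangential components of `E` and the normal component of `B` are continuous, then
the normal derivative of the auxiliary scalar `α` has no jump across the interface. -/
theorem normal_derivative_alpha_no_jump
    (U : Set (Fin 3 → ℝ)) (hU : IsOpen U) (ω : ℂ)
    (Ep Bp Em Bm : (Fin 3 → ℝ) → Fin 3 → ℂ) (αp αm : (Fin 3 → ℝ) → ℂ)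
    (hEp : ContDiffOn ℝ 1 Ep U) (hBp : ContDiffOn ℝ 1 Bp U) (hαp : ContDiffOn ℝ 1 αp U)
    (hEm : ContDiffOn ℝ 1 Em U) (hBm : ContDiffOn ℝ 1 Bm U) (hαm : ContDiffOn ℝ 1 αm U)
    (hp : ∀ x ∈ U, x 2 > 0 → ∀ i, vcurl Ep x i + pd3 i αp x = I * ω * Bp x i)
    (hm : ∀ x ∈ U, x 2 < 0 → ∀ i, vcurl Em x i + pd3 i αm x = I * ω * Bm x i)
    (hint : ∀ x ∈ U, x 2 = 0 →
      Ep x 0 = Em x 0 ∧ Ep x 1 = Em x 1 ∧ Bp x 2 = Bm x 2) :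
    ∀ x ∈ U, x 2 = 0 → pd3 2 αp x = pd3 2 αm x := by
  intro x hx hx2
  -- component functions
  have hEp0 := contDiffOn_pi.mp hEp 0
  have hEp1 := contDiffOn_pi.mp hEp 1
  have hEm0 := contDiffOn_pi.mp hEm 0
  have hEm1 := contDiffOn_pi.mp hEm 1
  have hBp2 := contDiffOn_pi.mp hBp 2
  have hBm2 := contDiffOn_pi.mp hBm 2
  -- the interface equation for the plus side
  have hGp : ContinuousOn (fun y => vcurl Ep y 2 + pd3 2 αp y - I * ω * Bp y 2) U := by
    have h1 := pd3_contOn hU hEp1 (Pi.single 0 1)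
    have h2 := pd3_contOn hU hEp0 (Pi.single 1 1)
    have h3 := pd3_contOn hU hαp (Pi.single 2 1)
    have h4 : ContinuousOn (fun y => I * ω * Bp y 2) U :=
      continuousOn_const.mul hBp2.continuousOn
    have : ContinuousOn (fun y => (fderiv ℝ (fun z => Ep z 1) y (Pi.single 0 1)
        - fderiv ℝ (fun z => Ep z 0) y (Pi.single 1 1)) + fderiv ℝ αp y (Pi.single 2 1)
        - I * ω * Bp y 2) U := ((h1.sub h2).add h3).sub h4
    simpa [vcurl, pd3] using this
  have hplus : vcurl Ep x 2 + pd3 2 αp x - I * ω * Bp x 2 = 0 :=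
    interface_limit hU hGp (fun y hy hy2 => by rw [hp y hy hy2 2]; ring) hx hx2
  -- the interface equation for the minus side (apply interface_limit to reflected coords?)
  -- instead: same proof with a sign-flipped sequence; reuse via interface_limit on -x 2? do a direct variant
  have hGm : ContinuousOn (fun y => vcurl Em y 2 + pd3 2 αm y - I * ω * Bm y 2) U := by
    have h1 := pd3_contOn hU hEm1 (Pi.single 0 1)
    have h2 := pd3_contOn hU hEm0 (Pi.single 1 1)
    have h3 := pd3_contOn hU hαm (Pi.single 2 1)
    have h4 : ContinuousOn (fun y => I * ω * Bm y 2) U :=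
      continuousOn_const.mul hBm2.continuousOn
    have : ContinuousOn (fun y => (fderiv ℝ (fun z => Em z 1) y (Pi.single 0 1)
        - fderiv ℝ (fun z => Em z 0) y (Pi.single 1 1)) + fderiv ℝ αm y (Pi.single 2 1)
        - I * ω * Bm y 2) U := ((h1.sub h2).add h3).sub h4
    simpa [vcurl, pd3] using this
  have hminus : vcurl Em x 2 + pd3 2 αm x - I * ω * Bm x 2 = 0 :=
    interface_limit_neg hU hGm (fun y hy hy2 => by rw [hm y hy hy2 2]; ring) hx hx2
  -- tangential derivatives match
  have hdiff : ∀ (f : (Fin 3 → ℝ) → ℂ), ContDiffOn ℝ 1 f U → DifferentiableAt ℝ f x :=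
    fun f hf => (hf.differentiableOn one_ne_zero).differentiableAt (hU.mem_nhds hx)
  have htan : ∀ (j : Fin 3) (f g : (Fin 3 → ℝ) → ℂ), ContDiffOn ℝ 1 f U → ContDiffOn ℝ 1 g U →
      (∀ y ∈ U, y 2 = 0 → f y = g y) → (Pi.single j 1 : Fin 3 → ℝ) 2 = 0 →
      pd3 j f x = pd3 j g x := by
    intro j f g hf hg hfg hj
    have hd : fderiv ℝ (fun y => f y - g y) x (Pi.single j 1) = 0 :=
      tangential_deriv_zero hU hx ((hdiff f hf).sub (hdiff g hg))
        (fun y hy hy2 => by rw [Pi.sub_apply, hfg y hy hy2]; ring) hx2 hj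
    have := fderiv_fun_sub (hdiff f hf) (hdiff g hg)
    rw [this] at hd
    simp only [ContinuousLinearMap.sub_apply] at hd
    have h' : pd3 j f x - pd3 j g x = 0 := hd
    exact sub_eq_zero.mp h'
  have h4 : pd3 0 (fun y => Ep y 1) x = pd3 0 (fun y => Em y 1) x :=
    htan 0 _ _ hEp1 hEm1 (fun y hy hy2 => (hint y hy hy2).2.1) (by simp)
  have h5 : pd3 1 (fun y => Ep y 0) x = pd3 1 (fun y => Em y 0) x :=
    htan 1 _ _ hEp0 hEm0 (fun y hy hy2 => (hint y hy hy2).1) (by simp)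
  have h3 : Bp x 2 = Bm x 2 := (hint x hx hx2).2.2
  have hvp : vcurl Ep x 2 = pd3 0 (fun y => Ep y 1) x - pd3 1 (fun y => Ep y 0) x := by
    simp [vcurl]
  have hvm : vcurl Em x 2 = pd3 0 (fun y => Em y 1) x - pd3 1 (fun y => Em y 0) x := by
    simp [vcurl]
  rw [hvp] at hplus
  rw [hvm] at hminus
  linear_combination hplus - hminus - h4 + h5 + I * ω * h3
end

section
/- Let U ⊆ ℝ³ be open and ω ∈ ℂ. Let E⁺, B⁺, K⁺ : U → ℂ³ with E⁺ continuously differentiable and B⁺, K⁺ continuous on U, satisfying curl E⁺ = iωB⁺ + K⁺ on U ∩ {x₃ > 0}; let E⁻, B⁻, K⁻ : U → ℂ³ with E⁻ continuously differentiable and B⁻, K⁻ continuous on U, satisfying curl E⁻ = iωB⁻ + K⁻ on U ∩ {x₃ < 0}. Then at every point x₀ = (y₀, 0) ∈ U ∩ {x₃ = 0}, (K⁺₃ − K⁻₃)(x₀) + iω(B⁺₃ − B⁻₃)(x₀) = ∂₁g₂(y₀) − ∂₂g₁(y₀), where g(y) = (E⁺₁(y,0) − E⁻₁(y,0), E⁺₂(y,0)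 − E⁻₂(y,0)) is the jump across the plane of the first two components of E. (Flat-interface classical form of the compatibility relation K_ν^Γ + iωB_ν^Γ = −div_τ E_τ^Γ of Theorem 4.3: the jumps of the normal components of K and B across the interface are determined by the jump of the tangential components of E.) -/
open Complex

/-- Partial derivative `∂ᵢ` of a scalar function on `ℝ²`. -/
noncomputable def pd2 (i : Fin 2) (f : (Fin 2 → ℝ) → ℂ) (y : Fin 2 → ℝ) : ℂ :=
  fderiv ℝ f y (Pi.single i 1)

/-- Embedding of the plane `{x₃ = 0}` into `ℝ³`. -/
def emb (y : Fin 2 → ℝ) : Fin 3 → ℝ := ![y 0, y 1, 0]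

noncomputable def embL : (Fin 2 → ℝ) →L[ℝ] (Fin 3 → ℝ) :=
  ContinuousLinearMap.pi ![ContinuousLinearMap.proj 0, ContinuousLinearMap.proj 1, 0]

lemma embL_eq : (emb : (Fin 2 → ℝ) → Fin 3 → ℝ) = ⇑embL := by
  funext y i
  fin_cases i <;> simp [embL, emb]

lemma embL_single0 : embL (Pi.single 0 1) = Pi.single (0 : Fin 3) 1 := by
  funext i; fin_cases i <;> simp [embL, Pi.single_apply]

lemma embL_single1 : embL (Pi.single 1 1) = Pi.single (1 : Fin 3) 1 := by
  funext i; fin_cases i <;> simp [embL, Pi.single_apply]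

lemma comp_fderiv_at {F : (Fin 3 → ℝ) → Fin 3 → ℂ} {x : Fin 3 → ℝ}
    (hd : DifferentiableAt ℝ F x) (i j : Fin 3) :
    pd3 i (fun y => F y j) x = fderiv ℝ F x (Pi.single i 1) j := by
  have h : HasFDerivAt (fun y => F y j)
      ((ContinuousLinearMap.proj (R := ℝ) (φ := fun _ : Fin 3 => ℂ) j).comp (fderiv ℝ F x)) x :=
    (ContinuousLinearMap.proj (R := ℝ) (φ := fun _ : Fin 3 => ℂ) j).hasFDerivAt.comp x
      hd.hasFDerivAt
  rw [pd3, h.fderiv]; rfl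

lemma eq_on_boundary {U : Set (Fin 3 → ℝ)} (hU : IsOpen U) {f : (Fin 3 → ℝ) → ℂ}
    (hf : ContinuousOn f U) (h0 : ∀ x ∈ U, x 2 > 0 → f x = 0)
    {x₀ : Fin 3 → ℝ} (hx : x₀ ∈ U) (hx2 : x₀ 2 = 0) : f x₀ = 0 := by
  set c : ℝ → Fin 3 → ℝ := fun t => Function.update x₀ 2 t with hc
  have hcc : Continuous c := continuous_const.update 2 continuous_id
  have hc0 : c 0 = x₀ := by rw [hc]; simpa [← hx2] using Function.update_eq_self 2 x₀
  have hmem : ∀ᶠ t in nhdsWithin 0 (Set.Ioi 0), c t ∈ U := by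
    apply Filter.Eventually.filter_mono nhdsWithin_le_nhds
    exact hcc.continuousAt.preimage_mem_nhds (by rw [hc0]; exact hU.mem_nhds hx)
  have htc : Filter.Tendsto c (nhdsWithin 0 (Set.Ioi 0)) (nhdsWithin x₀ U) := by
    rw [tendsto_nhdsWithin_iff]
    refine ⟨?_, hmem⟩
    have := hcc.tendsto 0
    rw [hc0] at this
    exact this.mono_left nhdsWithin_le_nhds
  have h1 : Filter.Tendsto (f ∘ c) (nhdsWithin 0 (Set.Ioi 0)) (nhds (f x₀)) :=
    (hf x₀ hx).tendsto.comp htc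
  have h2 : (f ∘ c) =ᶠ[nhdsWithin 0 (Set.Ioi 0)] fun _ => 0 := by
    filter_upwards [hmem, self_mem_nhdsWithin] with t htU ht
    exact h0 (c t) htU (by simpa [hc] using ht)
  exact tendsto_nhds_unique h1 (Filter.Tendsto.congr' h2.symm tendsto_const_nhds)

lemma eq_on_boundary' {U : Set (Fin 3 → ℝ)} (hU : IsOpen U) {f : (Fin 3 → ℝ) → ℂ}
    (hf : ContinuousOn f U) (h0 : ∀ x ∈ U, x 2 < 0 → f x = 0)
    {x₀ : Fin 3 → ℝ} (hx : x₀ ∈ U) (hx2 : x₀ 2 = 0) : f x₀ = 0 := by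
  set c : ℝ → Fin 3 → ℝ := fun t => Function.update x₀ 2 t with hc
  have hcc : Continuous c := continuous_const.update 2 continuous_id
  have hc0 : c 0 = x₀ := by rw [hc]; simpa [← hx2] using Function.update_eq_self 2 x₀
  have hmem : ∀ᶠ t in nhdsWithin 0 (Set.Iio 0), c t ∈ U := by
    apply Filter.Eventually.filter_mono nhdsWithin_le_nhds
    exact hcc.continuousAt.preimage_mem_nhds (by rw [hc0]; exact hU.mem_nhds hx)
  have htc : Filter.Tendsto c (nhdsWithin 0 (Set.Iio 0)) (nhdsWithin x₀ U) := by
    rw [tendsto_nhdsWithin_iff]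
    refine ⟨?_, hmem⟩
    have := hcc.tendsto 0
    rw [hc0] at this
    exact this.mono_left nhdsWithin_le_nhds
  have h1 : Filter.Tendsto (f ∘ c) (nhdsWithin 0 (Set.Iio 0)) (nhds (f x₀)) :=
    (hf x₀ hx).tendsto.comp htc
  have h2 : (f ∘ c) =ᶠ[nhdsWithin 0 (Set.Iio 0)] fun _ => 0 := by
    filter_upwards [hmem, self_mem_nhdsWithin] with t htU ht
    exact h0 (c t) htU (by simpa [hc] using ht)
  exact tendsto_nhds_unique h1 (Filter.Tendsto.congr' h2.symm tendsto_const_nhds)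

lemma pd3_continuousOn {U : Set (Fin 3 → ℝ)} (hU : IsOpen U)
    {F : (Fin 3 → ℝ) → Fin 3 → ℂ} (hF : ContDiffOn ℝ 1 F U) (i j : Fin 3) :
    ContinuousOn (fun x => pd3 i (fun y => F y j) x) U := by
  have h1 : ContinuousOn (fderiv ℝ F) U := hF.continuousOn_fderiv_of_isOpen hU le_rfl
  have h2 : ContinuousOn (fun x => fderiv ℝ F x (Pi.single i 1) j) U :=
    ((continuous_apply j).comp
      (ContinuousLinearMap.apply ℝ (Fin 3 → ℂ)
        ((Pi.single i 1 : Fin 3 → ℝ))).continuous).comp_continuousOn h1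
  exact h2.congr fun x hx =>
    comp_fderiv_at ((hF.contDiffAt (hU.mem_nhds hx)).differentiableAt one_ne_zero) i j

lemma hasFDerivAt_comp_emb {F : (Fin 3 → ℝ) → Fin 3 → ℂ} {y₀ : Fin 2 → ℝ}
    (hd : DifferentiableAt ℝ F (emb y₀)) (j : Fin 3) :
    HasFDerivAt (fun y => F (emb y) j)
      (((ContinuousLinearMap.proj (R := ℝ) (φ := fun _ : Fin 3 => ℂ) j).comp
        (fderiv ℝ F (emb y₀))).comp embL) y₀ := by
  have h1 : HasFDerivAt (fun x => F x j)
      ((ContinuousLinearMap.proj (R := ℝ) (φ := fun _ : Fin 3 => ℂ) j).comp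
        (fderiv ℝ F (emb y₀))) (emb y₀) :=
    (ContinuousLinearMap.proj (R := ℝ) (φ := fun _ : Fin 3 => ℂ) j).hasFDerivAt.comp _
      hd.hasFDerivAt
  have h2 : HasFDerivAt emb embL y₀ := by rw [embL_eq]; exact embL.hasFDerivAt
  exact h1.comp y₀ h2

/-- Flat-interface classical form of the compatibility relation
`K_ν^Γ + iωB_ν^Γ = -div_τ E_τ^Γ` of Theorem 4.3: the jumps of the normal components of
`K` and `B` across the interface `{x₃ = 0}` are determined by the jump of the tangential
components of `E`. -/
theorem interface_jump_compatibility
    (U : Set (Fin 3 → ℝ)) (hU : IsOpen U) (ω : ℂ)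
    (Ep Bp Kp Em Bm Km : (Fin 3 → ℝ) → Fin 3 → ℂ)
    (hEp : ContDiffOn ℝ 1 Ep U) (hBp : ContinuousOn Bp U) (hKp : ContinuousOn Kp U)
    (hEm : ContDiffOn ℝ 1 Em U) (hBm : ContinuousOn Bm U) (hKm : ContinuousOn Km U)
    (hp : ∀ x ∈ U, x 2 > 0 → ∀ i, vcurl Ep x i = I * ω * Bp x i + Kp x i)
    (hm : ∀ x ∈ U, x 2 < 0 → ∀ i, vcurl Em x i = I * ω * Bm x i + Km x i)
    (y₀ : Fin 2 → ℝ) (hx : emb y₀ ∈ U) :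
    (Kp (emb y₀) 2 - Km (emb y₀) 2) + I * ω * (Bp (emb y₀) 2 - Bm (emb y₀) 2) =
      pd2 0 (fun y => Ep (emb y) 1 - Em (emb y) 1) y₀ -
      pd2 1 (fun y => Ep (emb y) 0 - Em (emb y) 0) y₀ := by
  set x₀ := emb y₀ with hx₀
  have hx2 : x₀ 2 = 0 := by simp [hx₀, emb]
  have hdEp : DifferentiableAt ℝ Ep x₀ :=
    (hEp.contDiffAt (hU.mem_nhds hx)).differentiableAt one_ne_zero
  have hdEm : DifferentiableAt ℝ Em x₀ :=
    (hEm.contDiffAt (hU.mem_nhds hx)).differentiableAt one_ne_zero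
  have hvc : ∀ (F : (Fin 3 → ℝ) → Fin 3 → ℂ) (x : Fin 3 → ℝ),
      vcurl F x 2 = pd3 0 (fun y => F y 1) x - pd3 1 (fun y => F y 0) x := by
    intro F x; simp [vcurl]
  -- boundary identity for the + side
  have hP : vcurl Ep x₀ 2 = I * ω * Bp x₀ 2 + Kp x₀ 2 := by
    have key : (fun x => (pd3 0 (fun y => Ep y 1) x - pd3 1 (fun y => Ep y 0) x) -
        (I * ω * Bp x 2 + Kp x 2)) x₀ = 0 := by
      refine eq_on_boundary (f := fun x => (pd3 0 (fun y => Ep y 1) x - pd3 1 (fun y => Ep y 0) x) - (I * ω * Bp x 2 + Kp x 2)) hU ?_ ?_ hx hx2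
      · exact ((pd3_continuousOn hU hEp 0 1).sub (pd3_continuousOn hU hEp 1 0)).sub
          ((continuousOn_const.mul ((continuous_apply 2).comp_continuousOn hBp)).add
            ((continuous_apply 2).comp_continuousOn hKp))
      · intro x hxU hpos
        have := hp x hxU hpos 2
        rw [hvc] at this
        rw [this]; ring
    rw [hvc]
    exact sub_eq_zero.mp key
  -- boundary identity for the - side
  have hM : vcurl Em x₀ 2 = I * ω * Bm x₀ 2 + Km x₀ 2 := by
    have key : (fun x => (pd3 0 (fun y => Em y 1) x - pd3 1 (fun y => Em y 0) x) -
        (I * ω * Bm x 2 + Km x 2)) x₀ = 0 := by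
      refine eq_on_boundary' (f := fun x => (pd3 0 (fun y => Em y 1) x - pd3 1 (fun y => Em y 0) x) - (I * ω * Bm x 2 + Km x 2)) hU ?_ ?_ hx hx2
      · exact ((pd3_continuousOn hU hEm 0 1).sub (pd3_continuousOn hU hEm 1 0)).sub
          ((continuousOn_const.mul ((continuous_apply 2).comp_continuousOn hBm)).add
            ((continuous_apply 2).comp_continuousOn hKm))
      · intro x hxU hneg
        have := hm x hxU hneg 2
        rw [hvc] at this
        rw [this]; ring
    rw [hvc]
    exact sub_eq_zero.mp key
  -- chain rule identities
  have hc01 : pd2 0 (fun y => Ep (emb y) 1 - Em (emb y) 1) y₀ =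
      fderiv ℝ Ep x₀ (Pi.single 0 1) 1 - fderiv ℝ Em x₀ (Pi.single 0 1) 1 := by
    have h : HasFDerivAt (fun y => Ep (emb y) 1 - Em (emb y) 1) _ y₀ := (hasFDerivAt_comp_emb hdEp 1).sub (hasFDerivAt_comp_emb hdEm 1)
    rw [pd2, h.fderiv]
    simp [embL_single0]; rfl
  have hc10 : pd2 1 (fun y => Ep (emb y) 0 - Em (emb y) 0) y₀ =
      fderiv ℝ Ep x₀ (Pi.single 1 1) 0 - fderiv ℝ Em x₀ (Pi.single 1 1) 0 := by
    have h : HasFDerivAt (fun y => Ep (emb y) 0 - Em (emb y) 0) _ y₀ := (hasFDerivAt_comp_emb hdEp 0).sub (hasFDerivAt_comp_emb hdEm 0)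
    rw [pd2, h.fderiv]
    simp [embL_single1]; rfl
  have hp01 := comp_fderiv_at hdEp 0 1
  have hp10 := comp_fderiv_at hdEp 1 0
  have hm01 := comp_fderiv_at hdEm 0 1
  have hm10 := comp_fderiv_at hdEm 1 0
  rw [hvc, hp01, hp10] at hP
  rw [hvc, hm01, hm10] at hM
  rw [hc01, hc10]
  linear_combination hM - hP
end
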